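/- Suppose r − s ≡ 3 (mod 4) and there is a Lie algebra isomorphism Φ = A ⊕ C : N_{r,s}(V₊) → N_{r,s}(V₋) between the pseudo H-type algebras built on the two non-equivalent irreducible minimal admissible Cl_{r,s}-modules, with A^τ J̃_z A = J_{C^τ(z)} and C C^τ = Id. Then A A^τ = −(det C)·Id. Moreover if s = 0 (so that the scalar products are positive definite) then det C = −1 and A A^τ = Id. -/

import Mathlib

section Aux
variable {R : Type*} [Ring R]

lemma aux_collapse (K : R) : ∀ l : List R, (∀ x ∈ l, K * x * K = x) →
    (l.map (fun y => K * y)).prod = if Even l.length then l.prod else K * l.prod := by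
  intro l
  induction l with
  | nil => intro _; simp
  | cons x t ih =>
    intro h
    have hx : K * x * K = x := h x List.mem_cons_self
    have ht := ih (fun y hy => h y (List.mem_cons_of_mem x hy))
    by_cases he : Even t.length
    · have hne : ¬ Even (x :: t).length := by simp [List.length_cons, Nat.even_add_one, he]
      rw [List.map_cons, List.prod_cons, ht, if_pos he, if_neg hne, List.prod_cons, mul_assoc]
    · have hyes : Even (x :: t).length := by simp [List.length_cons, Nat.even_add_one, he]
      rw [List.map_cons, List.prod_cons, ht, if_neg he, if_pos hyes, List.prod_cons,
        ← mul_assoc, hx]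

lemma aux_swap01 {k : ℕ} (m : Fin (k + 2) → R) (h01 : m 0 * m 1 = -(m 1 * m 0)) :
    (List.ofFn (m ∘ ⇑(Equiv.swap 0 1))).prod = -(List.ofFn m).prod := by
  have hfix : ∀ i : Fin k, (Equiv.swap (0 : Fin (k+2)) 1) i.succ.succ = i.succ.succ := by
    intro i
    apply Equiv.swap_apply_of_ne_of_ne
    · exact Fin.succ_ne_zero _
    · rw [← Fin.succ_zero_eq_one]
      intro hc
      exact Fin.succ_ne_zero _ (Fin.succ_injective _ hc)
  simp only [List.ofFn_succ, List.prod_cons, Function.comp_apply, Fin.succ_zero_eq_one,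
    Equiv.swap_apply_left, Equiv.swap_apply_right, hfix]
  rw [← mul_assoc, ← mul_assoc, h01, neg_mul, neg_neg]

lemma aux_swap : ∀ (k : ℕ) (m : Fin k → R), (∀ i j : Fin k, i ≠ j → m i * m j = -(m j * m i)) →
    ∀ x y : Fin k, x ≠ y → (List.ofFn (m ∘ ⇑(Equiv.swap x y))).prod = -(List.ofFn m).prod := by
  intro k
  induction k with
  | zero => intro m _ x; exact x.elim0
  | succ k ih =>
    intro m hm x y hxy
    rcases Nat.eq_zero_or_pos k with rfl | hk
    · exact absurd (Fin.ext (by have := x.isLt; have := y.isLt; omega : (x : ℕ) = (y : ℕ))) hxy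
    obtain ⟨k', rfl⟩ := Nat.exists_eq_succ_of_ne_zero hk.ne'
    have h10 : (1 : Fin (k' + 2)) ≠ 0 := by
      rw [← Fin.succ_zero_eq_one]; exact Fin.succ_ne_zero _
    -- helper: swap of two successors
    have hsucc : ∀ (m : Fin (k' + 2) → R), (∀ i j, i ≠ j → m i * m j = -(m j * m i)) →
        ∀ (x' y' : Fin (k' + 1)), x' ≠ y' →
        (List.ofFn (m ∘ ⇑(Equiv.swap x'.succ y'.succ))).prod = -(List.ofFn m).prod := by
      intro m hm x' y' hne
      have hfun : (fun i : Fin (k' + 1) => (m ∘ ⇑(Equiv.swap x'.succ y'.succ)) i.succ) =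
          ((m ∘ Fin.succ) ∘ ⇑(Equiv.swap x' y')) := by
        funext i
        show m (Equiv.swap x'.succ y'.succ i.succ) = m (Fin.succ (Equiv.swap x' y' i))
        rw [Function.Injective.swap_apply (Fin.succ_injective _)]
      have hhead : (m ∘ ⇑(Equiv.swap x'.succ y'.succ)) 0 = m 0 := by
        show m (Equiv.swap x'.succ y'.succ 0) = m 0
        rw [Equiv.swap_apply_of_ne_of_ne (Fin.succ_ne_zero x').symm (Fin.succ_ne_zero y').symm]
      have hlist : List.ofFn (m ∘ ⇑(Equiv.swap x'.succ y'.succ)) =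
          m 0 :: List.ofFn ((m ∘ Fin.succ) ∘ ⇑(Equiv.swap x' y')) := by
        rw [List.ofFn_succ, hhead, hfun]
      rw [hlist, List.prod_cons,
        ih (m ∘ Fin.succ) (fun i j hij => hm _ _ (fun hc => hij (Fin.succ_injective _ hc)))
          x' y' hne,
        mul_neg]
      simp only [List.ofFn_succ, List.prod_cons, Function.comp_apply]
    -- helper: swap with 0
    have hzero : ∀ (m : Fin (k' + 2) → R), (∀ i j, i ≠ j → m i * m j = -(m j * m i)) →
        ∀ y : Fin (k' + 2), y ≠ 0 →
        (List.ofFn (m ∘ ⇑(Equiv.swap 0 y))).prod = -(List.ofFn m).prod := by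
      intro m hm y hy0
      rcases eq_or_ne y 1 with rfl | hy1
      · exact aux_swap01 m (hm 0 1 h10.symm)
      obtain ⟨y', rfl⟩ := Fin.exists_succ_eq_of_ne_zero hy0
      have hy'0 : (0 : Fin (k' + 1)) ≠ y' := by
        intro hc
        exact hy1 (by rw [← hc, Fin.succ_zero_eq_one])
      have h1y : (1 : Fin (k' + 2)) ≠ y'.succ := fun hc => hy1 hc.symm
      have e1 : Equiv.swap (0 : Fin (k' + 2)) 1 0 = 1 := Equiv.swap_apply_left _ _
      have e4 : Equiv.swap (0 : Fin (k' + 2)) 1 1 = 0 := Equiv.swap_apply_right _ _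
      have e3 : Equiv.swap (0 : Fin (k' + 2)) 1 y'.succ = y'.succ :=
        Equiv.swap_apply_of_ne_of_ne hy0 hy1
      have f1 : Equiv.swap (1 : Fin (k' + 2)) y'.succ 1 = y'.succ := Equiv.swap_apply_left _ _
      have f2 : Equiv.swap (1 : Fin (k' + 2)) y'.succ y'.succ = 1 := Equiv.swap_apply_right _ _
      have f3 : Equiv.swap (1 : Fin (k' + 2)) y'.succ 0 = 0 :=
        Equiv.swap_apply_of_ne_of_ne h10.symm (fun hc => hy0 hc.symm)
      have g1 : Equiv.swap (0 : Fin (k' + 2)) y'.succ 0 = y'.succ := Equiv.swap_apply_left _ _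
      have g2 : Equiv.swap (0 : Fin (k' + 2)) y'.succ y'.succ = 0 := Equiv.swap_apply_right _ _
      have key : m ∘ ⇑(Equiv.swap 0 y'.succ) =
          ((m ∘ ⇑(Equiv.swap (0 : Fin (k' + 2)) 1)) ∘ ⇑(Equiv.swap 1 y'.succ)) ∘
            ⇑(Equiv.swap (0 : Fin (k' + 2)) 1) := by
        funext t
        simp only [Function.comp_apply]
        by_cases ht0 : t = 0
        · subst ht0
          rw [g1, e1, f1, e3]
        by_cases ht1 : t = 1
        · subst ht1
          rw [Equiv.swap_apply_of_ne_of_ne h10 h1y, e4, f3, e1]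
        by_cases hty : t = y'.succ
        · subst hty
          rw [g2, e3, f2, e4]
        · rw [Equiv.swap_apply_of_ne_of_ne ht0 hty, Equiv.swap_apply_of_ne_of_ne ht0 ht1,
            Equiv.swap_apply_of_ne_of_ne ht1 hty, Equiv.swap_apply_of_ne_of_ne ht0 ht1]
      have hinj2 : Function.Injective
          (fun t => (Equiv.swap (0 : Fin (k' + 2)) 1) ((Equiv.swap (1 : Fin (k' + 2)) y'.succ) t)) :=
        (Equiv.swap (0 : Fin (k' + 2)) 1).injective.comp
          (Equiv.swap (1 : Fin (k' + 2)) y'.succ).injective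
      have hswrw : Equiv.swap (1 : Fin (k' + 2)) y'.succ =
          Equiv.swap (Fin.succ 0) (Fin.succ y') := by rw [Fin.succ_zero_eq_one]
      have hmsw : ∀ i j, i ≠ j → (m ∘ ⇑(Equiv.swap (0 : Fin (k' + 2)) 1)) i *
          (m ∘ ⇑(Equiv.swap (0 : Fin (k' + 2)) 1)) j =
          -((m ∘ ⇑(Equiv.swap (0 : Fin (k' + 2)) 1)) j *
            (m ∘ ⇑(Equiv.swap (0 : Fin (k' + 2)) 1)) i) :=
        fun i j hij => hm _ _ (fun hc => hij ((Equiv.swap _ _).injective hc))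
      have step2 := hsucc (m ∘ ⇑(Equiv.swap (0 : Fin (k' + 2)) 1)) hmsw 0 y' hy'0
      rw [key,
        aux_swap01 ((m ∘ ⇑(Equiv.swap (0 : Fin (k' + 2)) 1)) ∘ ⇑(Equiv.swap 1 y'.succ))
          (hm _ _ (fun hc => h10.symm (hinj2 hc))),
        hswrw, step2, neg_neg, aux_swap01 m (hm 0 1 h10.symm)]
    rcases eq_or_ne x 0 with rfl | hx0
    · exact hzero m hm y (Ne.symm hxy)
    rcases eq_or_ne y 0 with rfl | hy0
    · rw [Equiv.swap_comm]; exact hzero m hm x hx0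
    obtain ⟨x', rfl⟩ := Fin.exists_succ_eq_of_ne_zero hx0
    obtain ⟨y', rfl⟩ := Fin.exists_succ_eq_of_ne_zero hy0
    exact hsucc m hm x' y' (fun hc => hxy (by rw [hc]))

lemma aux_perm {k : ℕ} (σ : Equiv.Perm (Fin k)) :
    ∀ (m : Fin k → R), (∀ i j : Fin k, i ≠ j → m i * m j = -(m j * m i)) →
    (List.ofFn (m ∘ ⇑σ)).prod = ((Equiv.Perm.sign σ : ℤˣ) : ℤ) • (List.ofFn m).prod := by
  refine Equiv.Perm.swap_induction_on σ (fun m hm => by simp) (fun f x y hxy ihf m hm => ?_)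
  have hcomp : m ∘ ⇑(Equiv.swap x y * f) = (m ∘ ⇑(Equiv.swap x y)) ∘ ⇑f := by
    funext t; simp [Equiv.Perm.mul_apply]
  rw [hcomp, ihf (m ∘ ⇑(Equiv.swap x y))
      (fun i j hij => hm _ _ (fun hc => hij ((Equiv.swap x y).injective hc))),
    aux_swap _ m hm x y hxy, Equiv.Perm.sign_mul, Equiv.Perm.sign_swap hxy]
  simp [smul_smul]

end Aux

/-- Suppose `r - s ≡ 3 (mod 4)` and `Φ = A ⊕ C` is a Lie algebra isomorphism
`N_{r,s}(V₊) → N_{r,s}(V₋)` between the pseudo `H`-type algebras built on the two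
non-equivalent irreducible minimal admissible modules (the volume form acting as `+Id` on
`V₊` and `-Id` on `V₋`), with `Aᵀ J̃_z A = J_{Cᵀ z}` and `C Cᵀ = Id`.  Then
`A Aᵀ = -(det C)·Id`; moreover if `s = 0` (so the scalar products are positive definite)
then `det C = -1` and `A Aᵀ = Id`. -/
theorem volume_form_isomorphism_det
    {Vp Vm Z : Type*}
    [AddCommGroup Vp] [Module ℝ Vp] [FiniteDimensional ℝ Vp] [Nontrivial Vp]
    [AddCommGroup Vm] [Module ℝ Vm] [FiniteDimensional ℝ Vm]
    [AddCommGroup Z] [Module ℝ Z] [FiniteDimensional ℝ Z]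
    (r s n : ℕ) (hn : r + s = n) (hrs : (r : ℤ) - (s : ℤ) ≡ 3 [ZMOD 4])
    (BZ : LinearMap.BilinForm ℝ Z) (bz : Module.Basis (Fin n) ℝ Z)
    (hbz : ∀ i j, BZ (bz i) (bz j) =
      if i = j then (if (i : ℕ) < r then 1 else -1) else 0)
    (Bp : LinearMap.BilinForm ℝ Vp) (hBpnd : Bp.Nondegenerate)
    (hBpsymm : ∀ x y : Vp, Bp x y = Bp y x)
    (Bm : LinearMap.BilinForm ℝ Vm) (hBmnd : Bm.Nondegenerate)
    (hBmsymm : ∀ x y : Vm, Bm x y = Bm y x)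
    (J : Z →ₗ[ℝ] Module.End ℝ Vp)
    (hJCl : ∀ a b : Z, J a * J b + J b * J a = -(2 * BZ a b) • (1 : Module.End ℝ Vp))
    (hJskew : ∀ (z : Z) (x y : Vp), Bp (J z x) y + Bp x (J z y) = 0)
    (J' : Z →ₗ[ℝ] Module.End ℝ Vm)
    (hJ'Cl : ∀ a b : Z, J' a * J' b + J' b * J' a = -(2 * BZ a b) • (1 : Module.End ℝ Vm))
    (hJ'skew : ∀ (z : Z) (x y : Vm), Bm (J' z x) y + Bm x (J' z y) = 0)
    (hΩp : (List.ofFn fun i => J (bz i)).prod = (1 : Module.End ℝ Vp))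
    (hΩm : (List.ofFn fun i => J' (bz i)).prod = -(1 : Module.End ℝ Vm))
    (A : Vp →ₗ[ℝ] Vm) (hA : Function.Bijective A)
    (Aτ : Vm →ₗ[ℝ] Vp) (hAτ : ∀ (x : Vp) (y : Vm), Bm (A x) y = Bp x (Aτ y))
    (C : Z →ₗ[ℝ] Z) (Cτ : Z →ₗ[ℝ] Z)
    (hCτ : ∀ a b : Z, BZ (C a) b = BZ a (Cτ b))
    (hCCτ : C ∘ₗ Cτ = LinearMap.id)
    (hrel : ∀ z : Z, (Aτ ∘ₗ (J' z : Vm →ₗ[ℝ] Vm) ∘ₗ A : Vp →ₗ[ℝ] Vp) = J (Cτ z)) :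
    (A ∘ₗ Aτ : Vm →ₗ[ℝ] Vm) = -(LinearMap.det C) • LinearMap.id ∧
    (s = 0 → (∀ x : Vp, x ≠ 0 → 0 < Bp x x) → (∀ x : Vm, x ≠ 0 → 0 < Bm x x) →
      LinearMap.det C = -1 ∧ (A ∘ₗ Aτ : Vm →ₗ[ℝ] Vm) = LinearMap.id) := by
  classical
  -- Cτ ∘ C = id
  have hCτC : Cτ ∘ₗ C = LinearMap.id := by
    have h := mul_eq_one_comm.mp (show C * Cτ = 1 from hCCτ)
    exact h
  have hCτCapp : ∀ z : Z, Cτ (C z) = z := fun z => DFunLike.congr_fun hCτC z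
  -- C is an isometry of BZ
  have hCiso : ∀ u v : Z, BZ (C u) (C v) = BZ u v := fun u v => by
    rw [hCτ, hCτCapp]
  set ε : Fin n → ℝ := fun i => if (i : ℕ) < r then 1 else -1 with hε
  have hεne : ∀ i, ε i ≠ 0 := by
    intro i; by_cases h : (i : ℕ) < r <;> simp [hε, h]
  have hbzd : ∀ i, BZ (bz i) (bz i) = ε i := fun i => by rw [hbz]; simp [hε]
  have horthbz : ∀ i j : Fin n, i ≠ j → BZ (bz i) (bz j) = 0 := fun i j hij => by
    rw [hbz]; simp [hij]
  have horthC : ∀ i j : Fin n, i ≠ j → BZ (C (bz i)) (C (bz j)) = 0 := fun i j hij => by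
    rw [hCiso]; exact horthbz i j hij
  -- the equivalence induced by A
  set e : Vp ≃ₗ[ℝ] Vm := LinearEquiv.ofBijective A hA with he
  have hEA : ∀ v : Vp, e.symm (A v) = v := fun v => e.symm_apply_apply v
  have hAE : ∀ w : Vm, A (e.symm w) = w := fun w => e.apply_symm_apply w
  -- conjugation ring hom
  set ψ : Module.End ℝ Vm →+* Module.End ℝ Vp :=
    { toFun := fun x => (e.symm : Vm →ₗ[ℝ] Vp) ∘ₗ x ∘ₗ (A : Vp →ₗ[ℝ] Vm)
      map_one' := by ext v; simp [hEA]
      map_mul' := fun x y => by ext v; simp [Module.End.mul_apply, hAE]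
      map_zero' := by ext v; simp
      map_add' := fun x y => by ext v; simp } with hψ
  have hψapp : ∀ (x : Module.End ℝ Vm) (v : Vp), ψ x v = e.symm (x (A v)) := fun x v => rfl
  have hψinj : Function.Injective ψ := by
    intro x y hxy
    ext w
    have h1 : e.symm (x (A (e.symm w))) = e.symm (y (A (e.symm w))) := by
      have := DFunLike.congr_fun hxy (e.symm w)
      exact this
    have h2 := e.symm.injective h1
    rwa [hAE] at h2
  have hψsmul : ∀ (c : ℝ) (x : Module.End ℝ Vm), ψ (c • x) = c • ψ x := by
    intro c x; ext v
    simp [hψapp, LinearMap.smul_apply, map_smul]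
  set K : Module.End ℝ Vm := (A : Vp →ₗ[ℝ] Vm) ∘ₗ Aτ with hK
  have hψK : ∀ x : Module.End ℝ Vm,
      ψ (K * x) = Aτ ∘ₗ (x : Vm →ₗ[ℝ] Vm) ∘ₗ (A : Vp →ₗ[ℝ] Vm) := by
    intro x; ext v
    simp [hψapp, Module.End.mul_apply, hK, LinearMap.comp_apply, hEA, hAE]
  set a : Fin n → Module.End ℝ Vm := fun i => J' (C (bz i)) with ha
  have hb : ∀ i, ψ (K * a i) = J (bz i) := by
    intro i
    rw [hψK, ha, hrel (C (bz i)), hCτCapp]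
  -- Clifford relations
  have haCl : ∀ i j, a i * a j + a j * a i
      = -(2 * BZ (bz i) (bz j)) • (1 : Module.End ℝ Vm) := fun i j => by
    rw [ha]; rw [hJ'Cl, hCiso]
  have hanti : ∀ i j, i ≠ j → a i * a j = -(a j * a i) := by
    intro i j hij
    have h := haCl i j
    rw [horthbz i j hij] at h
    simp only [mul_zero, neg_zero, zero_smul] at h
    exact eq_neg_of_add_eq_zero_left h
  have hasq : ∀ i, a i * a i = (-(ε i)) • (1 : Module.End ℝ Vm) := by
    intro i
    have h := haCl i i
    rw [hbzd i] at h
    have h2 : (2 : ℝ) • (a i * a i) = (-(2 * ε i)) • (1 : Module.End ℝ Vm) := by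
      rw [two_smul]; exact h
    calc a i * a i = ((2 : ℝ)⁻¹ * 2) • (a i * a i) := by norm_num
      _ = (2 : ℝ)⁻¹ • ((2 : ℝ) • (a i * a i)) := by rw [mul_smul]
      _ = (2 : ℝ)⁻¹ • ((-(2 * ε i)) • (1 : Module.End ℝ Vm)) := by rw [h2]
      _ = (-(ε i)) • (1 : Module.End ℝ Vm) := by rw [smul_smul]; ring_nf
  have hbsq : ∀ i, J (bz i) * J (bz i) = (-(ε i)) • (1 : Module.End ℝ Vp) := by
    intro i
    have h := hJCl (bz i) (bz i)
    rw [hbzd i] at h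
    have h2 : (2 : ℝ) • (J (bz i) * J (bz i)) = (-(2 * ε i)) • (1 : Module.End ℝ Vp) := by
      rw [two_smul]; exact h
    calc J (bz i) * J (bz i) = ((2 : ℝ)⁻¹ * 2) • (J (bz i) * J (bz i)) := by norm_num
      _ = (2 : ℝ)⁻¹ • ((2 : ℝ) • (J (bz i) * J (bz i))) := by rw [mul_smul]
      _ = (2 : ℝ)⁻¹ • ((-(2 * ε i)) • (1 : Module.End ℝ Vp)) := by rw [h2]
      _ = (-(ε i)) • (1 : Module.End ℝ Vp) := by rw [smul_smul]; ring_nf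
  -- K * a i * K = a i
  have hKaK : ∀ i, K * a i * K = a i := by
    intro i
    have h1 : ψ ((K * a i) * (K * a i)) = ψ ((-(ε i)) • (1 : Module.End ℝ Vm)) := by
      rw [map_mul, hb i, hψsmul, map_one]
      exact hbsq i
    have h2 : (K * a i) * (K * a i) = (-(ε i)) • (1 : Module.End ℝ Vm) := hψinj h1
    have hinv : a i * ((-(ε i))⁻¹ • a i) = 1 := by
      rw [mul_smul_comm, hasq i, smul_smul, inv_mul_cancel₀ (neg_ne_zero.mpr (hεne i)), one_smul]
    calc K * a i * K = K * a i * K * (a i * ((-(ε i))⁻¹ • a i)) := by rw [hinv, mul_one]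
      _ = ((K * a i) * (K * a i)) * ((-(ε i))⁻¹ • a i) := by
          simp only [mul_assoc]
      _ = ((-(ε i)) • (1 : Module.End ℝ Vm)) * ((-(ε i))⁻¹ • a i) := by rw [h2]
      _ = a i := by
          rw [smul_mul_assoc, one_mul, smul_smul,
            mul_inv_cancel₀ (neg_ne_zero.mpr (hεne i)), one_smul]
  -- the product of (K * a i) equals 1
  have hψprod : ψ ((List.ofFn fun i => K * a i).prod) = 1 := by
    rw [map_list_prod]
    have h1 : (List.ofFn fun i => K * a i).map ψ = List.ofFn fun i => J (bz i) := by
      rw [List.map_ofFn]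
      exact congrArg List.ofFn (funext fun i => hb i)
    rw [h1, hΩp]
  have hprod1 : (List.ofFn fun i => K * a i).prod = 1 := by
    apply hψinj
    rw [hψprod, map_one]
  -- n is odd
  have hodd : ¬ Even n := by
    have h4 : ((r : ℤ) - (s : ℤ)) % 4 = 3 % 4 := hrs
    rw [Nat.even_iff]
    omega
  set W : Module.End ℝ Vm := (List.ofFn a).prod with hW
  have hKW : K * W = 1 := by
    have hcol := aux_collapse K (List.ofFn a) (by
      intro x hx
      rw [List.mem_ofFn] at hx
      obtain ⟨i, rfl⟩ := hx
      exact hKaK i)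
    rw [List.length_ofFn, if_neg hodd] at hcol
    have hmap : (List.ofFn a).map (fun y => K * y) = List.ofFn fun i => K * a i := by
      rw [List.map_ofFn]; rfl
    rw [hmap, hprod1] at hcol
    exact hcol.symm
  -- multilinear machinery
  set F : MultilinearMap ℝ (fun _ : Fin n => Z) (Module.End ℝ Vm) :=
    (MultilinearMap.mkPiAlgebraFin ℝ n (Module.End ℝ Vm)).compLinearMap (fun _ => J') with hF
  have hFapply : ∀ v : Fin n → Z, F v = (List.ofFn fun i => J' (v i)).prod := by
    intro v
    rw [hF, MultilinearMap.compLinearMap_apply, MultilinearMap.mkPiAlgebraFin_apply]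
  set G := MultilinearMap.alternatization F with hG
  have horthF : ∀ v : Fin n → Z, (∀ i j : Fin n, i ≠ j → BZ (v i) (v j) = 0) →
      G v = (n.factorial : ℤ) • F v := by
    intro v hv
    have hanticv : ∀ i j : Fin n, i ≠ j →
        (J' (v i)) * (J' (v j)) = -((J' (v j)) * (J' (v i))) := by
      intro i j hij
      have h := hJ'Cl (v i) (v j)
      rw [hv i j hij] at h
      simp only [mul_zero, neg_zero, zero_smul] at h
      exact eq_neg_of_add_eq_zero_left h
    rw [hG, MultilinearMap.alternatization_apply]
    have hterm : ∀ σ : Equiv.Perm (Fin n),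
        Equiv.Perm.sign σ • F.domDomCongr σ v = F v := by
      intro σ
      rw [MultilinearMap.domDomCongr_apply]
      have h1 : (F fun i => v (σ i)) = (List.ofFn ((fun i => J' (v i)) ∘ ⇑σ)).prod := by
        rw [hFapply]; rfl
      rw [h1, aux_perm σ _ hanticv, ← hFapply]
      rw [Units.smul_def, smul_smul, ← Units.val_mul, Int.units_mul_self, Units.val_one, one_smul]
    rw [Finset.sum_congr rfl (fun σ _ => hterm σ)]
    rw [Finset.sum_const, Finset.card_univ, Fintype.card_perm, Fintype.card_fin]
    rw [natCast_zsmul]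
  -- E : G (C ∘ bz) = det C • G bz
  have hE : G (fun i => C (bz i)) = (LinearMap.det C) • G ⇑bz := by
    rw [← sub_eq_zero]
    rw [← Module.forall_dual_apply_eq_zero_iff ℝ]
    intro g
    have hsc := AlternatingMap.eq_smul_basis_det (e := bz) (g.compAlternatingMap G)
    have h1 : g (G (fun i => C (bz i))) = (g.compAlternatingMap G) (fun i => C (bz i)) := rfl
    have h2 : g (G ⇑bz) = (g.compAlternatingMap G) ⇑bz := rfl
    rw [map_sub, map_smul, h1, h2, hsc]
    simp only [AlternatingMap.smul_apply, smul_eq_mul]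
    have h3 : (fun i => C (bz i)) = (⇑C ∘ ⇑bz) := rfl
    rw [h3, Module.Basis.det_comp, Module.Basis.det_self]
    ring
  have hGbz : G ⇑bz = (n.factorial : ℤ) • (-(1 : Module.End ℝ Vm)) := by
    rw [horthF ⇑bz horthbz, hFapply]
    rw [hΩm]
  have hGC : G (fun i => C (bz i)) = (n.factorial : ℤ) • W := by
    rw [horthF _ (fun i j hij => horthC i j hij), hFapply]
  have hWval : W = (-(LinearMap.det C)) • (1 : Module.End ℝ Vm) := by
    have h1 : (n.factorial : ℝ) • W =
        (n.factorial : ℝ) • ((-(LinearMap.det C)) • (1 : Module.End ℝ Vm)) := by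
      calc (n.factorial : ℝ) • W = n.factorial • W := Nat.cast_smul_eq_nsmul ℝ _ _
        _ = (n.factorial : ℤ) • W := (natCast_zsmul _ _).symm
        _ = G (fun i => C (bz i)) := hGC.symm
        _ = (LinearMap.det C) • G ⇑bz := hE
        _ = (LinearMap.det C) • ((n.factorial : ℤ) • (-(1 : Module.End ℝ Vm))) := by rw [hGbz]
        _ = (n.factorial : ℤ) • ((LinearMap.det C) • (-(1 : Module.End ℝ Vm))) :=
            smul_comm _ _ _
        _ = n.factorial • ((LinearMap.det C) • (-(1 : Module.End ℝ Vm))) := natCast_zsmul _ _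
        _ = (n.factorial : ℝ) • ((LinearMap.det C) • (-(1 : Module.End ℝ Vm))) :=
            (Nat.cast_smul_eq_nsmul ℝ _ _).symm
        _ = (n.factorial : ℝ) • ((-(LinearMap.det C)) • (1 : Module.End ℝ Vm)) := by
            rw [smul_neg, neg_smul]
    exact smul_right_injective _ (by positivity) h1
  -- det C * det C = 1
  have hdet2 : LinearMap.det C * LinearMap.det C = 1 := by
    have hcomp : BZ.compl₁₂ C LinearMap.id = BZ.compl₁₂ LinearMap.id Cτ := by
      apply LinearMap.ext; intro u; apply LinearMap.ext; intro v
      simp [LinearMap.compl₁₂_apply, hCτ u v]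
    have e1 := LinearMap.toMatrix₂_compl₁₂ bz bz bz bz BZ C LinearMap.id
    have e2 := LinearMap.toMatrix₂_compl₁₂ bz bz bz bz BZ LinearMap.id Cτ
    rw [hcomp, e2, LinearMap.toMatrix_id] at e1
    have h1 : ((LinearMap.toMatrix bz bz) C).transpose * ((LinearMap.toMatrix₂ bz bz) BZ) =
        ((LinearMap.toMatrix₂ bz bz) BZ) * ((LinearMap.toMatrix bz bz) Cτ) := by
      simpa using e1.symm
    have hG2diag : (LinearMap.toMatrix₂ bz bz) BZ = Matrix.diagonal ε := by
      ext i j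
      rw [LinearMap.toMatrix₂_apply, hbz, Matrix.diagonal_apply]
    have hdetG : ((LinearMap.toMatrix₂ bz bz) BZ).det ≠ 0 := by
      rw [hG2diag, Matrix.det_diagonal]
      exact Finset.prod_ne_zero_iff.mpr (fun i _ => hεne i)
    have hdetMN : ((LinearMap.toMatrix bz bz) C).det = ((LinearMap.toMatrix bz bz) Cτ).det := by
      have h2 := congrArg Matrix.det h1
      rw [Matrix.det_mul, Matrix.det_mul, Matrix.det_transpose,
        mul_comm ((LinearMap.toMatrix bz bz) C).det] at h2
      exact mul_left_cancel₀ hdetG h2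
    have hMN : (LinearMap.toMatrix bz bz) C * (LinearMap.toMatrix bz bz) Cτ = 1 := by
      rw [← LinearMap.toMatrix_comp bz bz bz C Cτ, hCCτ, LinearMap.toMatrix_id]
    have h3 : ((LinearMap.toMatrix bz bz) C).det * ((LinearMap.toMatrix bz bz) Cτ).det = 1 := by
      rw [← Matrix.det_mul, hMN, Matrix.det_one]
    rw [← hdetMN] at h3
    rw [← LinearMap.det_toMatrix bz C]
    exact h3
  have hdpm : LinearMap.det C = 1 ∨ LinearMap.det C = -1 := mul_self_eq_one_iff.mp hdet2
  -- main conclusion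
  have hmain : (A ∘ₗ Aτ : Vm →ₗ[ℝ] Vm) = -(LinearMap.det C) • LinearMap.id := by
    have h1 : K * ((-(LinearMap.det C)) • (1 : Module.End ℝ Vm)) = 1 := by
      rw [← hWval]; exact hKW
    have h2 : (-(LinearMap.det C)) • K = 1 := by
      rwa [mul_smul_comm, mul_one] at h1
    have hcc : (-(LinearMap.det C)) * (-(LinearMap.det C)) = 1 := by
      rw [neg_mul_neg, hdet2]
    have h4 : K = (-(LinearMap.det C)) • (1 : Module.End ℝ Vm) := by
      calc K = ((-(LinearMap.det C)) * (-(LinearMap.det C))) • K := by rw [hcc, one_smul]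
        _ = (-(LinearMap.det C)) • ((-(LinearMap.det C)) • K) := by rw [mul_smul]
        _ = (-(LinearMap.det C)) • (1 : Module.End ℝ Vm) := by rw [h2]
    exact h4
  refine ⟨hmain, fun hs hp hm' => ?_⟩
  -- positive definite case
  have hAτinj : ∀ y : Vm, Aτ y = 0 → y = 0 := by
    intro y hy
    apply hBmnd.1 y
    intro w
    rw [hBmsymm]
    obtain ⟨x, rfl⟩ := hA.2 w
    rw [hAτ, hy, map_zero]
  obtain ⟨x0, hx0⟩ := exists_ne (0 : Vp)
  have hy0 : A x0 ≠ 0 := fun h => hx0 (hA.1 (by rw [h, map_zero]))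
  have hAτy : Aτ (A x0) ≠ 0 := fun h => hy0 (hAτinj _ h)
  have hpos : 0 < Bm ((A ∘ₗ Aτ) (A x0)) (A x0) := by
    have h5 : (A ∘ₗ Aτ : Vm →ₗ[ℝ] Vm) (A x0) = A (Aτ (A x0)) := rfl
    rw [h5, hAτ]
    exact hp _ hAτy
  have hdet : LinearMap.det C = -1 := by
    rcases hdpm with h1 | h1
    · exfalso
      rw [hmain, h1] at hpos
      have h6 : ((-(1 : ℝ)) • (LinearMap.id : Vm →ₗ[ℝ] Vm)) (A x0) = -(A x0) := by
        simp
      rw [h6] at hpos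
      have h7 : 0 < Bm (A x0) (A x0) := hm' _ hy0
      rw [map_neg, LinearMap.neg_apply] at hpos
      linarith
    · exact h1
  refine ⟨hdet, ?_⟩
  have h8 : K = -(LinearMap.det C) • LinearMap.id := hmain
  rw [h8, hdet]
  norm_num
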